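/- For a real-valued function h on subsets of a finite set V with h(∅) = 0, h satisfies all elemental inequalities (H_h(A | V\{A}) ≥ 0 for all A ∈ V, and I_h(A;B|C) ≥ 0 for all distinct A,B and C ⊆ V\{A,B}) if and only if h is a polymatroid, i.e., h is monotone (h(S) ≤ h(T) whenever S ⊆ T) and submodular (h(S) + h(T) ≥ h(S∪T) + h(S∩T)). -/
import Mathlib


open Finset
open scoped Classical

variable {V : Type*}

/-- A polymatroid: normalized, monotone, submodular set function. -/
def IsPolymatroid [Fintype V] [DecidableEq V] (h : Finset V → ℝ) : Prop :=
  h ∅ = 0 ∧ (∀ S T : Finset V, S ⊆ T → h S ≤ h T) ∧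
    ∀ S T : Finset V, h (S ∪ T) + h (S ∩ T) ≤ h S + h T

/-- `h` satisfies the functional dependencies `Φ`: `H_h(X | Y) = 0` for each `(X, Y) ∈ Φ`. -/
def SatisfiesFD [Fintype V] [DecidableEq V] (h : Finset V → ℝ)
    (Φ : Finset (Finset V × Finset V)) : Prop :=
  ∀ p ∈ Φ, h (p.1 ∪ p.2) = h p.2

/-- Closure of `C` under the functional dependencies `Φ`. -/
noncomputable def closureFD [Fintype V] [DecidableEq V] (Φ : Finset (Finset V × Finset V))
    (C : Finset V) : Finset V :=
  Finset.univ.filter (fun a => ∀ h : Finset V → ℝ, IsPolymatroid h → SatisfiesFD h Φ →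
    h (insert a C) = h C)

/-- Conditional mutual information `I_h(A;B|C)` of singletons. -/
def Ih [DecidableEq V] (h : Finset V → ℝ) (A B : V) (C : Finset V) : ℝ :=
  h (insert A C) + h (insert B C) - h (insert A (insert B C)) - h C

/-- `A ∼_C B`: `A` and `B` imply each other conditioned on `C`. -/
def SimC [Fintype V] [DecidableEq V] (Φ : Finset (Finset V × Finset V)) (C : Finset V)
    (A B : V) : Prop :=
  B ∈ closureFD Φ (insert A C) ∧ A ∈ closureFD Φ (insert B C)

/-- `A` is `C`-minimal. -/
def CMinimal [Fintype V] [DecidableEq V] (Φ : Finset (Finset V × Finset V)) (C : Finset V)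
    (A : V) : Prop :=
  A ∉ C ∧ ∀ B : V, B ∉ C → B ∈ closureFD Φ (insert A C) → A ∈ closureFD Φ (insert B C)
/-- A set function with `h(∅) = 0` satisfies all elemental inequalities iff it is a
polymatroid (monotone and submodular). -/
theorem stmt2 [Fintype V] [DecidableEq V] (h : Finset V → ℝ) (h0 : h ∅ = 0) :
    ((∀ A : V, h (insert A (Finset.univ \ {A})) - h (Finset.univ \ {A}) ≥ 0) ∧
     (∀ (A B : V) (C : Finset V), A ≠ B → A ∉ C → B ∉ C → Ih h A B C ≥ 0))
    ↔ ((∀ S T : Finset V, S ⊆ T → h S ≤ h T) ∧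
       (∀ S T : Finset V, h S + h T ≥ h (S ∪ T) + h (S ∩ T))) := by
  constructor
  · rintro ⟨hel, hI⟩
    have step : ∀ (a b : V) (S : Finset V), a ∉ S → a ≠ b →
        h (insert a (insert b S)) - h (insert b S) ≤ h (insert a S) - h S := by
      intro a b S haS hab
      by_cases hbS : b ∈ S
      · rw [Finset.insert_eq_self.mpr hbS]
      · have := hI a b S hab haS hbS
        unfold Ih at this; linarith
    have dim : ∀ (n : ℕ) (a : V) (S T : Finset V), S ⊆ T → a ∉ T → (T \ S).card = n →
        h (insert a T) - h T ≤ h (insert a S) - h S := by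
      intro n
      induction n with
      | zero =>
        intro a S T hST haT hcard
        have hTS : T = S :=
          Finset.Subset.antisymm
            (Finset.sdiff_eq_empty_iff_subset.mp (Finset.card_eq_zero.mp hcard)) hST
        subst hTS; exact le_refl _
      | succ n ih =>
        intro a S T hST haT hcard
        obtain ⟨b, hb⟩ : (T \ S).Nonempty := by
          rw [Finset.nonempty_iff_ne_empty]
          intro he; rw [he] at hcard; simp at hcard
        have hbT : b ∈ T := (Finset.mem_sdiff.mp hb).1
        have hbS : b ∉ S := (Finset.mem_sdiff.mp hb).2
        have hsub : insert b S ⊆ T := Finset.insert_subset hbT hST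
        have hab : a ≠ b := fun h' => haT (h' ▸ hbT)
        have h1 := step a b S (fun h' => haT (hST h')) hab
        have hc : (T \ insert b S).card = n := by
          have c1 : (T \ S).card = T.card - S.card := Finset.card_sdiff_of_subset hST
          have c2 : (T \ insert b S).card = T.card - (insert b S).card :=
            Finset.card_sdiff_of_subset hsub
          have c3 : (insert b S).card = S.card + 1 := Finset.card_insert_of_notMem hbS
          have c4 : S.card ≤ T.card := Finset.card_le_card hST
          have c5 : (insert b S).card ≤ T.card := Finset.card_le_card hsub
          omega
        have h2 := ih a (insert b S) T hsub haT hc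
        linarith
    have mono1 : ∀ (a : V) (S : Finset V), h S ≤ h (insert a S) := by
      intro a S
      by_cases haS : a ∈ S
      · rw [Finset.insert_eq_self.mpr haS]
      · have hsub : S ⊆ Finset.univ \ {a} := by
          intro x hx
          simp only [Finset.mem_sdiff, Finset.mem_univ, Finset.mem_singleton, true_and]
          intro hxa; exact haS (hxa ▸ hx)
        have hna : a ∉ Finset.univ \ {a} := by simp
        have := dim ((Finset.univ \ {a}) \ S).card a S (Finset.univ \ {a}) hsub hna rfl
        have := hel a
        linarith
    have mono : ∀ S T : Finset V, S ⊆ T → h S ≤ h T := by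
      intro S T hST
      have : ∀ (n : ℕ) (S T : Finset V), S ⊆ T → (T \ S).card = n → h S ≤ h T := by
        intro n
        induction n with
        | zero =>
          intro S T hST hcard
          have hTS : T = S :=
            Finset.Subset.antisymm
              (Finset.sdiff_eq_empty_iff_subset.mp (Finset.card_eq_zero.mp hcard)) hST
          subst hTS; exact le_refl _
        | succ n ih =>
          intro S T hST hcard
          obtain ⟨b, hb⟩ : (T \ S).Nonempty := by
            rw [Finset.nonempty_iff_ne_empty]
            intro he; rw [he] at hcard; simp at hcard
          have hbT : b ∈ T := (Finset.mem_sdiff.mp hb).1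
          have hbS : b ∉ S := (Finset.mem_sdiff.mp hb).2
          have hsub : insert b S ⊆ T := Finset.insert_subset hbT hST
          have hc : (T \ insert b S).card = n := by
            have c1 : (T \ S).card = T.card - S.card := Finset.card_sdiff_of_subset hST
            have c2 : (T \ insert b S).card = T.card - (insert b S).card :=
              Finset.card_sdiff_of_subset hsub
            have c3 : (insert b S).card = S.card + 1 := Finset.card_insert_of_notMem hbS
            have c4 : S.card ≤ T.card := Finset.card_le_card hST
            have c5 : (insert b S).card ≤ T.card := Finset.card_le_card hsub
            omega
          exact le_trans (mono1 b S) (ih (insert b S) T hsub hc)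
      exact this _ S T hST rfl
    have dim' : ∀ (a : V) (S T : Finset V), S ⊆ T →
        h (insert a T) - h T ≤ h (insert a S) - h S := by
      intro a S T hST
      by_cases haT : a ∈ T
      · rw [Finset.insert_eq_self.mpr haT]
        have := mono1 a S
        linarith
      · exact dim _ a S T hST haT rfl
    have dimSet : ∀ (A S T : Finset V), S ⊆ T →
        h (A ∪ T) - h T ≤ h (A ∪ S) - h S := by
      intro A
      induction A using Finset.induction with
      | empty => intro S T hST; simp
      | @insert a A ha ih =>
        intro S T hST
        have e1 : insert a A ∪ T = insert a (A ∪ T) := Finset.insert_union a A T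
        have e2 : insert a A ∪ S = insert a (A ∪ S) := Finset.insert_union a A S
        rw [e1, e2]
        have h1 := dim' a (A ∪ S) (A ∪ T) (Finset.union_subset_union_right hST)
        have h2 := ih S T hST
        linarith
    refine ⟨mono, ?_⟩
    intro S T
    have h1 := dimSet S (S ∩ T) T Finset.inter_subset_right
    have e : S ∪ S ∩ T = S := by
      apply Finset.Subset.antisymm
      · exact Finset.union_subset (le_refl S) Finset.inter_subset_left
      · exact Finset.subset_union_left
    rw [e] at h1
    linarith
  · rintro ⟨mono, submod⟩
    constructor
    · intro A
      have := mono (Finset.univ \ {A}) (insert A (Finset.univ \ {A}))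
        (Finset.subset_insert _ _)
      linarith
    · intro A B C hAB hAC hBC
      have h1 := submod (insert A C) (insert B C)
      have e1 : insert A C ∪ insert B C = insert A (insert B C) := by
        ext x; simp; tauto
      have e2 : insert A C ∩ insert B C = C := by
        ext x
        simp only [Finset.mem_inter, Finset.mem_insert]
        constructor
        · rintro ⟨hu1 | hu1, hu2 | hu2⟩
          · subst hu1; exact absurd hu2 hAB
          · subst hu1; exact absurd hu2 hAC
          · subst hu2; exact absurd hu1 hBC
          · exact hu1
        · intro hx; exact ⟨Or.inr hx, Or.inr hx⟩
      rw [e1, e2] at h1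
      unfold Ih
      linarith
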